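/- Let c ≥ 0, β ∈ ℝ, g > 0, λ > 0, and suppose φ : ℝ → ℝ is differentiable, satisfies φ'(z) = λ h(φ(z)) + (g/2) ρ_c(λ) w(φ(z)) for all z ∈ ℝ, and φ(π) − φ(−π) = 2π. Then 4λ²β + 2gλ ρ_c(λ) = 1. -/

import Mathlib

/-- `h(θ) = 1 - cos θ + β(1 + cos θ)`. -/
noncomputable def hTheta (β θ : ℝ) : ℝ := 1 - Real.cos θ + β * (1 + Real.cos θ)

/-- `w(θ) = 1 + cos θ`. -/
noncomputable def wTheta (θ : ℝ) : ℝ := 1 + Real.cos θ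

/-- `ρ_c(λ) = (e^{2πλ} - 1)/(e^{2πλ + c/2} - 1)`. -/
noncomputable def rhoC (c lam : ℝ) : ℝ :=
  (Real.exp (2 * Real.pi * lam) - 1) / (Real.exp (2 * Real.pi * lam + c / 2) - 1)

private lemma hasDerivAt_G (A B S : ℝ) (hS : 0 < S) (hS2 : S ^ 2 = A ^ 2 - B ^ 2)
    (hden : ∀ t : ℝ, 0 < A + S + B * Real.cos t) (θ : ℝ)
    (hpos : 0 < A + B * Real.cos θ) :
    HasDerivAt (fun t : ℝ => (t - 2 * Real.arctan (B * Real.sin t / (A + S + B * Real.cos t))) / S)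
      (1 / (A + B * Real.cos θ)) θ := by
  have hD : (A + S + B * Real.cos θ) ≠ 0 := ne_of_gt (hden θ)
  have hnum : HasDerivAt (fun t : ℝ => B * Real.sin t) (B * Real.cos θ) θ :=
    (Real.hasDerivAt_sin θ).const_mul B
  have hd : HasDerivAt (fun t : ℝ => A + S + B * Real.cos t) (B * -Real.sin θ) θ :=
    ((Real.hasDerivAt_cos θ).const_mul B).const_add (A + S)
  have hu : HasDerivAt (fun t : ℝ => B * Real.sin t / (A + S + B * Real.cos t)) _ θ :=
    hnum.div hd hD
  have harc := hu.arctan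
  have hfull := ((hasDerivAt_id θ).sub (harc.const_mul 2)).div_const S
  refine hfull.congr_deriv ?_
  symm
  set x := Real.cos θ
  set y := Real.sin θ
  have hxy : y ^ 2 = 1 - x ^ 2 := by
    have := Real.sin_sq_add_cos_sq θ; nlinarith [this]
  have hAS : (0:ℝ) < A + S := by have := hden (Real.pi/2); simpa using this
  have hAB : (A + B * x) ≠ 0 := ne_of_gt hpos
  have hASne : (A + S) ≠ 0 := ne_of_gt hAS
  have h1 : 1 + (B * y / (A + S + B * x)) ^ 2
      = 2 * (A + S) * (A + B * x) / (A + S + B * x) ^ 2 := by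
    field_simp
    linear_combination (B^2) * hxy + hS2
  have h2 : (B * x * (A + S + B * x) - B * y * (B * -y)) = B * x * (A + S) + B ^ 2 := by
    linear_combination (B^2) * hxy
  rw [h1, h2]
  have e1 : 1 / (2 * (A + S) * (A + B * x) / (A + S + B * x) ^ 2)
      * ((B * x * (A + S) + B ^ 2) / (A + S + B * x) ^ 2)
      = (B * x * (A + S) + B ^ 2) / (2 * (A + S) * (A + B * x)) := by
    field_simp
  rw [e1]
  have e2 : 1 - 2 * ((B * x * (A + S) + B ^ 2) / (2 * (A + S) * (A + B * x)))
      = S / (A + B * x) := by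
    rw [eq_div_iff hAB]
    field_simp
    linear_combination (-1 : ℝ) * hS2
  rw [e2]
  field_simp

/-- Equation (4.5): in the uniform-coupling case `J ≡ 1`, a rotating-wave profile
of the autonomous equation (4.2) satisfying `φ(π) - φ(-π) = 2π` forces
`4λ²β + 2gλρ_c(λ) = 1`. -/
theorem rotating_waves_stmt_12 (c β g lam : ℝ) (hc : 0 ≤ c) (hg : 0 < g) (hlam : 0 < lam)
    (φ : ℝ → ℝ) (hφ : Differentiable ℝ φ)
    (hode : ∀ z : ℝ, deriv φ z
      = lam * hTheta β (φ z) + (g / 2) * rhoC c lam * wTheta (φ z))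
    (hper : φ Real.pi - φ (-Real.pi) = 2 * Real.pi) :
    4 * lam ^ 2 * β + 2 * g * lam * rhoC c lam = 1 := by
  set ρ := rhoC c lam with hρ
  set A : ℝ := lam * (1 + β) + g / 2 * ρ with hA
  set B : ℝ := lam * (β - 1) + g / 2 * ρ with hB
  have hode' : ∀ z : ℝ, HasDerivAt φ (A + B * Real.cos (φ z)) z := by
    intro z
    have h := (hφ z).hasDerivAt
    have heq : deriv φ z = A + B * Real.cos (φ z) := by
      rw [hode z]; simp only [hTheta, wTheta, hA, hB]; ring
    rwa [heq] at h
  have hAmB : A - B = 2 * lam := by rw [hA, hB]; ring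
  have hpi := Real.pi_pos
  by_cases hpos : ∀ t : ℝ, 0 < A + B * Real.cos t
  · -- regular case: A > |B|
    have hApB : 0 < A + B := by have := hpos 0; simpa using this
    have hsq : 0 < A ^ 2 - B ^ 2 := by nlinarith
    set S : ℝ := Real.sqrt (A ^ 2 - B ^ 2) with hSdef
    have hSpos : 0 < S := Real.sqrt_pos.2 hsq
    have hS2 : S ^ 2 = A ^ 2 - B ^ 2 := Real.sq_sqrt hsq.le
    have hden : ∀ t : ℝ, 0 < A + S + B * Real.cos t := fun t => by
      have := hpos t; linarith
    set G : ℝ → ℝ :=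
      fun t => (t - 2 * Real.arctan (B * Real.sin t / (A + S + B * Real.cos t))) / S with hG
    set H : ℝ → ℝ := fun z => G (φ z) - z with hH
    have hHderiv : ∀ z : ℝ, HasDerivAt H 0 z := by
      intro z
      have h1 := (hasDerivAt_G A B S hSpos hS2 hden (φ z) (hpos (φ z))).comp z (hode' z)
      have h2 := h1.sub (hasDerivAt_id z)
      have : 1 / (A + B * Real.cos (φ z)) * (A + B * Real.cos (φ z)) - 1 = 0 := by
        rw [one_div, inv_mul_cancel₀ (ne_of_gt (hpos (φ z))), sub_self]
      rw [this] at h2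
      exact h2
    have hconst : H Real.pi = H (-Real.pi) :=
      is_const_of_deriv_eq_zero (fun z => (hHderiv z).differentiableAt)
        (fun z => (hHderiv z).deriv) _ _
    have hφπ : φ Real.pi = φ (-Real.pi) + 2 * Real.pi := by linarith
    have hGper : G (φ (-Real.pi) + 2 * Real.pi) = G (φ (-Real.pi)) + 2 * Real.pi / S := by
      simp only [hG, Real.sin_add_two_pi, Real.cos_add_two_pi]
      ring
    have h2pi : G (φ Real.pi) - G (φ (-Real.pi)) = 2 * Real.pi := by
      simp only [hH] at hconst; linarith
    rw [hφπ, hGper] at h2pi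
    have hS1 : S = 1 := by
      have h3 : 2 * Real.pi / S = 2 * Real.pi := by linarith
      rw [div_eq_iff (ne_of_gt hSpos)] at h3
      have h4 : 2 * Real.pi * (S - 1) = 0 := by linarith
      rcases mul_eq_zero.1 h4 with h5 | h5
      · linarith
      · linarith
    have hfin : A ^ 2 - B ^ 2 = 1 := by rw [← hS2, hS1]; norm_num
    rw [hA, hB] at hfin
    linear_combination hfin
  · -- degenerate case: an equilibrium exists, contradiction
    exfalso
    push_neg at hpos
    obtain ⟨θ₀, hθ₀⟩ := hpos
    have hcont : Continuous fun t : ℝ => A + B * Real.cos t := by continuity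
    have hfπ : 0 < A + B * Real.cos Real.pi := by
      rw [Real.cos_pi]; linarith
    have h0mem : (0:ℝ) ∈ Set.uIcc (A + B * Real.cos θ₀) (A + B * Real.cos Real.pi) :=
      Set.mem_uIcc.2 (Or.inl ⟨hθ₀, hfπ.le⟩)
    obtain ⟨θ₁, -, hθ₁⟩ := intermediate_value_uIcc
      (hcont.continuousOn (s := Set.uIcc θ₀ Real.pi)) h0mem
    set k : ℤ := ⌈(φ (-Real.pi) - θ₁) / (2 * Real.pi)⌉ with hk
    set θs : ℝ := θ₁ + (k : ℝ) * (2 * Real.pi) with hθs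
    have h2pipos : (0:ℝ) < 2 * Real.pi := by linarith
    have hle1 : φ (-Real.pi) ≤ θs := by
      have := Int.le_ceil ((φ (-Real.pi) - θ₁) / (2 * Real.pi))
      rw [div_le_iff₀ h2pipos] at this
      rw [hθs]; linarith
    have hle2 : θs ≤ φ Real.pi := by
      have h' := mul_lt_mul_of_pos_right
        (Int.ceil_lt_add_one ((φ (-Real.pi) - θ₁) / (2 * Real.pi))) h2pipos
      rw [add_mul, div_mul_cancel₀ _ (ne_of_gt h2pipos), one_mul] at h'
      have hφπ : φ Real.pi = φ (-Real.pi) + 2 * Real.pi := by linarith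
      rw [hθs, hφπ]; linarith
    have hmem : θs ∈ Set.uIcc (φ (-Real.pi)) (φ Real.pi) :=
      Set.mem_uIcc.2 (Or.inl ⟨hle1, hle2⟩)
    obtain ⟨z₀, hz₀mem, hz₀⟩ := intermediate_value_uIcc
      (hφ.continuous.continuousOn (s := Set.uIcc (-Real.pi) Real.pi)) hmem
    rw [Set.uIcc_of_le (by linarith : -Real.pi ≤ Real.pi)] at hz₀mem
    have hfθs : A + B * Real.cos θs = 0 := by
      rw [hθs, Real.cos_add_int_mul_two_pi]; exact hθ₁
    -- Lipschitz vector field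
    have hlip : LipschitzWith ‖B‖₊ (fun x : ℝ => A + B * Real.cos x) := by
      apply lipschitzWith_of_nnnorm_deriv_le
      · exact (differentiable_const A).add (Real.differentiable_cos.const_mul B)
      · intro x
        have hd : HasDerivAt (fun x : ℝ => A + B * Real.cos x) (B * -Real.sin x) x :=
          ((Real.hasDerivAt_cos x).const_mul B).const_add A
        rw [hd.deriv]
        have : ‖B * -Real.sin x‖ ≤ ‖B‖ := by
          rw [norm_mul, norm_neg]
          exact mul_le_of_le_one_right (norm_nonneg _)
            (by rw [Real.norm_eq_abs]; exact Real.abs_sin_le_one x)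
        exact_mod_cast this
    have hz₀Ioo : z₀ ∈ Set.Ioo (-Real.pi - 1) (Real.pi + 1) := by
      constructor <;> [linarith [hz₀mem.1]; linarith [hz₀mem.2]]
    have huniq := ODE_solution_unique_of_mem_Icc
      (v := fun _ x => A + B * Real.cos x) (s := fun _ => Set.univ)
      (fun _ _ => hlip.lipschitzOnWith) hz₀Ioo hφ.continuous.continuousOn
      (fun t _ => hode' t) (fun _ _ => Set.mem_univ _)
      (continuousOn_const (c := θs))
      (fun t _ => by simpa [hfθs] using hasDerivAt_const t θs)
      (fun _ _ => Set.mem_univ _) hz₀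
    have e1 : φ Real.pi = θs :=
      huniq ⟨by linarith, by linarith⟩
    have e2 : φ (-Real.pi) = θs :=
      huniq ⟨by linarith, by linarith⟩
    rw [e1, e2] at hper
    simp at hper
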